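/- Let G ∈ 𝒢_k and let A ∈ F₂^{k×k} be its adjacency matrix over F₂ (symmetric with zero diagonal, A_{uv} = 1 iff uv ∈ E(G)). Define λ^Com_G = 2^{−k}·Σ_{S⊆[k]} (−1)^{|E(G)∩E(K_S)|} and λ^Piv_G = 2^{−2k}·Σ_{S,T⊆[k]} (−1)^{|E(G)∩E(K^△_{S,T})|}. Then λ^Piv_G = 2^{−rank_{F₂}(A)} and (λ^Com_G)² ≤ λ^Piv_G. -/

import Mathlib

open Finset

/-- `K_S`: the complete graph on the vertex subset `S`. -/
def cliqueOn {V : Type*} (S : Finset V) : SimpleGraph V where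
  Adj a b := a ∈ S ∧ b ∈ S ∧ a ≠ b
  symm := ⟨fun _ _ h => ⟨h.2.1, h.1, h.2.2.symm⟩⟩
  loopless := ⟨fun _ h => h.2.2 rfl⟩

/-- `K^△_{S,T}`: the complete tripartite graph with parts `S \ T`, `T \ S`,
`S ∩ T` (edges exactly between distinct parts). -/
def triOn {V : Type*} (S T : Finset V) : SimpleGraph V where
  Adj a b := (a ∈ S ∨ a ∈ T) ∧ (b ∈ S ∨ b ∈ T) ∧
    ¬((a ∈ S ↔ b ∈ S) ∧ (a ∈ T ↔ b ∈ T))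
  symm := ⟨fun _ _ h => ⟨h.2.1, h.1, fun hc => h.2.2 ⟨hc.1.symm, hc.2.symm⟩⟩⟩
  loopless := ⟨fun _ h => h.2.2 ⟨Iff.rfl, Iff.rfl⟩⟩

/-- `G △ H`: the graph whose edge set is the symmetric difference of the edge
sets of `G` and `H`. -/
def gSymmDiff {V : Type*} (G H : SimpleGraph V) : SimpleGraph V where
  Adj a b := (G.Adj a b ∧ ¬ H.Adj a b) ∨ (H.Adj a b ∧ ¬ G.Adj a b)
  symm := by
    refine ⟨?_⟩
    rintro a b (⟨h1, h2⟩ | ⟨h1, h2⟩)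
    · exact Or.inl ⟨h1.symm, fun hc => h2 hc.symm⟩
    · exact Or.inr ⟨h1.symm, fun hc => h2 hc.symm⟩
  loopless := by
    refine ⟨?_⟩
    rintro a (⟨h1, -⟩ | ⟨h1, -⟩)
    · exact G.irrefl h1
    · exact H.irrefl h1

/-- `χ_G(H) = (−1)^{|E(G) ∩ E(H)|}`. -/
noncomputable def chi {k : ℕ} (G : SimpleGraph (Fin k)) : SimpleGraph (Fin k) → ℝ :=
  fun H => (-1 : ℝ) ^ (Nat.card ↥(G ⊓ H).edgeSet)

/-- The `Com` walk operator: `(Com f)(H) = 2^{−k}·Σ_{S ⊆ [k]} f(H △ K_S)`. -/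
noncomputable def ComOp (k : ℕ) (f : SimpleGraph (Fin k) → ℝ) : SimpleGraph (Fin k) → ℝ :=
  fun H => ((2 : ℝ) ^ k)⁻¹ * ∑ S : Finset (Fin k), f (gSymmDiff H (cliqueOn S))

/-- The `Piv` walk operator:
`(Piv f)(H) = 2^{−2k}·Σ_{S,T ⊆ [k]} f(H △ K^△_{S,T})`. -/
noncomputable def PivOp (k : ℕ) (f : SimpleGraph (Fin k) → ℝ) : SimpleGraph (Fin k) → ℝ :=
  fun H => ((2 : ℝ) ^ (2 * k))⁻¹ *
    ∑ S : Finset (Fin k), ∑ T : Finset (Fin k), f (gSymmDiff H (triOn S T))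

/-- `λ^Com_G = 2^{−k}·Σ_{S ⊆ [k]} (−1)^{|E(G) ∩ E(K_S)|}`. -/
noncomputable def lamCom (k : ℕ) (G : SimpleGraph (Fin k)) : ℝ :=
  ((2 : ℝ) ^ k)⁻¹ * ∑ S : Finset (Fin k), (-1 : ℝ) ^ (Nat.card ↥(G ⊓ cliqueOn S).edgeSet)

/-- `λ^Piv_G = 2^{−2k}·Σ_{S,T ⊆ [k]} (−1)^{|E(G) ∩ E(K^△_{S,T})|}`. -/
noncomputable def lamPiv (k : ℕ) (G : SimpleGraph (Fin k)) : ℝ :=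
  ((2 : ℝ) ^ (2 * k))⁻¹ *
    ∑ S : Finset (Fin k), ∑ T : Finset (Fin k),
      (-1 : ℝ) ^ (Nat.card ↥(G ⊓ triOn S T).edgeSet)

open Classical in
/-- The adjacency matrix of `G` over `F₂` (symmetric with zero diagonal). -/
noncomputable def adjMat (k : ℕ) (G : SimpleGraph (Fin k)) : Matrix (Fin k) (Fin k) (ZMod 2) :=
  Matrix.of fun u w => if G.Adj u w then 1 else 0

namespace ER
noncomputable section

/-- sign character on `ZMod 2`. -/
def eps : ZMod 2 → ℝ := fun a => if a = 0 then 1 else -1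

lemma eps_zero : eps 0 = 1 := rfl

lemma zmod2_cases : ∀ a : ZMod 2, a = 0 ∨ a = 1 := by decide

lemma eps_add (a b : ZMod 2) : eps (a + b) = eps a * eps b := by
  have h2 : (1 + 1 : ZMod 2) = 0 := by decide
  have h1 : (1 : ZMod 2) ≠ 0 := by decide
  rcases zmod2_cases a with rfl | rfl <;> rcases zmod2_cases b with rfl | rfl <;>
    first
      | rw [show ((0:ZMod 2) + 0 = 0) from by decide]
      | rw [show ((0:ZMod 2) + 1 = 1) from by decide]
      | rw [show ((1:ZMod 2) + 0 = 1) from by decide]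
      | rw [h2]
  all_goals norm_num [eps, h1]

lemma eps_le_one (a : ZMod 2) : eps a ≤ 1 := by
  rcases zmod2_cases a with rfl | rfl <;> norm_num [eps]

lemma neg_one_pow_eq_eps (n : ℕ) : (-1 : ℝ) ^ n = eps (n : ZMod 2) := by
  induction n with
  | zero => simp [eps]
  | succ n ih =>
    rw [pow_succ, ih, Nat.cast_succ, eps_add]
    norm_num [eps]

lemma eps_sum {ι : Type*} (s : Finset ι) (f : ι → ZMod 2) :
    eps (∑ i ∈ s, f i) = ∏ i ∈ s, eps (f i) := by
  classical
  induction s using Finset.induction with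
  | empty => simp [eps]
  | @insert a s h ih => rw [Finset.sum_insert h, Finset.prod_insert h, eps_add, ih]

variable {k : ℕ}

/-- indicator vector of a finset -/
def ofS (S : Finset (Fin k)) : Fin k → ZMod 2 := fun u => if u ∈ S then 1 else 0

def fEquiv (k : ℕ) : Finset (Fin k) ≃ (Fin k → ZMod 2) where
  toFun := ofS
  invFun f := univ.filter fun u => f u = 1
  left_inv S := by
    ext u
    by_cases h : u ∈ S <;> simp [ofS, h]
  right_inv f := by
    funext u
    rcases zmod2_cases (f u) with h | h <;> simp [ofS, h]

/-- strictly increasing pairs -/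
def P (k : ℕ) : Finset (Fin k × Fin k) := univ.filter fun p => p.1 < p.2

lemma card_edgeSet_eq (H : SimpleGraph (Fin k)) [DecidableRel H.Adj] :
    Nat.card H.edgeSet = ((P k).filter fun p => H.Adj p.1 p.2).card := by
  rw [Nat.card_coe_set_eq, Set.ncard_eq_toFinset_card']
  refine (Finset.card_bij (s := (P k).filter fun p => H.Adj p.1 p.2) (t := H.edgeSet.toFinset) (fun p _ => Sym2.mk p.1 p.2) ?_ ?_ ?_).symm
  · rintro ⟨u, v⟩ hp
    simp only [P, Finset.mem_filter, Finset.mem_univ, true_and] at hp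
    simp [Set.mem_toFinset, SimpleGraph.mem_edgeSet, hp.2]
  · rintro ⟨u, v⟩ h1 ⟨u', v'⟩ h2 he
    simp only [P, Finset.mem_filter, Finset.mem_univ, true_and] at h1 h2
    rcases (Sym2.mk_eq_mk_iff (p := (u, v)) (q := (u', v'))).1 he with h | h
    · exact h
    · rw [Prod.ext_iff] at h
      simp only [Prod.fst_swap, Prod.snd_swap] at h
      exact absurd (h.1 ▸ h.2 ▸ h1.1) (lt_asymm h2.1)
  · intro e he
    induction e with
    | _ u v =>
      rw [Set.mem_toFinset, SimpleGraph.mem_edgeSet] at he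
      rcases lt_trichotomy u v with h | h | h
      · exact ⟨(u, v), by simp [P, Finset.mem_filter, h, he], rfl⟩
      · exact absurd (h ▸ he) (SimpleGraph.irrefl _)
      · exact ⟨(v, u), by simp [P, Finset.mem_filter, h, he.symm], Sym2.eq_swap⟩

lemma edge_parity (H : SimpleGraph (Fin k)) [DecidableRel H.Adj] :
    (-1 : ℝ) ^ (Nat.card H.edgeSet) =
      eps (∑ p ∈ P k, if H.Adj p.1 p.2 then 1 else 0) := by
  rw [neg_one_pow_eq_eps, card_edgeSet_eq, Finset.card_filter]
  congr 1
  push_cast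
  exact Finset.sum_congr rfl fun p _ => by split <;> simp

variable (G : SimpleGraph (Fin k))

lemma adjMat_symm (u v : Fin k) : adjMat k G u v = adjMat k G v u := by
  simp only [adjMat, Matrix.of_apply]
  rw [SimpleGraph.adj_comm]

lemma adjMat_diag (u : Fin k) : adjMat k G u u = 0 := by
  simp [adjMat]

lemma cliqueOn_adj (S : Finset (Fin k)) (u v : Fin k) :
    (cliqueOn S).Adj u v ↔ u ∈ S ∧ v ∈ S ∧ u ≠ v := Iff.rfl

lemma triOn_adj (S T : Finset (Fin k)) (u v : Fin k) :
    (triOn S T).Adj u v ↔ (u ∈ S ∨ u ∈ T) ∧ (v ∈ S ∨ v ∈ T) ∧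
      ¬((u ∈ S ↔ v ∈ S) ∧ (u ∈ T ↔ v ∈ T)) := Iff.rfl

lemma clique_term (S : Finset (Fin k)) (u v : Fin k)
    [Decidable ((G ⊓ cliqueOn S).Adj u v)] :
    (if (G ⊓ cliqueOn S).Adj u v then (1 : ZMod 2) else 0)
      = adjMat k G u v * ofS S u * ofS S v := by
  by_cases hG : G.Adj u v
  · have hne : u ≠ v := hG.ne
    by_cases hu : u ∈ S <;> by_cases hv : v ∈ S <;>
      simp [SimpleGraph.inf_adj, cliqueOn_adj, adjMat, ofS, hG, hu, hv, hne]
  · simp [SimpleGraph.inf_adj, adjMat, ofS, hG]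

lemma tri_term (S T : Finset (Fin k)) (u v : Fin k)
    [Decidable ((G ⊓ triOn S T).Adj u v)] :
    (if (G ⊓ triOn S T).Adj u v then (1 : ZMod 2) else 0)
      = adjMat k G u v * (ofS S u * ofS T v + ofS S v * ofS T u) := by
  by_cases hG : G.Adj u v
  · by_cases h1 : u ∈ S <;> by_cases h2 : u ∈ T <;>
      by_cases h3 : v ∈ S <;> by_cases h4 : v ∈ T <;>
      simp [SimpleGraph.inf_adj, triOn_adj, adjMat, ofS, hG, h1, h2, h3, h4] <;>
      decide
  · simp [SimpleGraph.inf_adj, adjMat, hG]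

lemma sum_P_pairing (x y : Fin k → ZMod 2) :
    ∑ p ∈ P k, adjMat k G p.1 p.2 * (x p.1 * y p.2 + x p.2 * y p.1)
      = ∑ u : Fin k, ∑ v : Fin k, adjMat k G u v * x u * y v := by
  have hrhs : ∑ u : Fin k, ∑ v : Fin k, adjMat k G u v * x u * y v
      = ∑ p : Fin k × Fin k, adjMat k G p.1 p.2 * x p.1 * y p.2 :=
    (Fintype.sum_prod_type (fun p : Fin k × Fin k =>
      adjMat k G p.1 p.2 * x p.1 * y p.2)).symm
  rw [hrhs,
    ← Finset.sum_filter_add_sum_filter_not (univ : Finset (Fin k × Fin k))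
      (fun p => p.1 < p.2) (fun p => adjMat k G p.1 p.2 * x p.1 * y p.2),
    ← Finset.sum_filter_add_sum_filter_not
      (univ.filter (fun p : Fin k × Fin k => ¬ p.1 < p.2))
      (fun p => p.2 < p.1) (fun p => adjMat k G p.1 p.2 * x p.1 * y p.2)]
  have hdiag : ∑ p ∈ (univ.filter (fun p : Fin k × Fin k => ¬ p.1 < p.2)).filter
      (fun p => ¬ p.2 < p.1), adjMat k G p.1 p.2 * x p.1 * y p.2 = 0 := by
    apply Finset.sum_eq_zero
    rintro ⟨u, v⟩ hp
    simp only [Finset.mem_filter] at hp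
    have huv : u = v := le_antisymm (not_lt.1 hp.2) (not_lt.1 hp.1.2)
    subst huv
    simp [adjMat_diag]
  rw [hdiag, add_zero]
  have hswap : ∑ p ∈ (univ.filter (fun p : Fin k × Fin k => ¬ p.1 < p.2)).filter
      (fun p => p.2 < p.1), adjMat k G p.1 p.2 * x p.1 * y p.2
      = ∑ p ∈ P k, adjMat k G p.1 p.2 * x p.2 * y p.1 := by
    refine Finset.sum_bij' (fun p _ => p.swap) (fun p _ => p.swap) ?_ ?_ ?_ ?_ ?_
    · rintro ⟨u, v⟩ hp
      simp only [Finset.mem_filter, Finset.mem_univ, true_and] at hp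
      simp [P, hp.2]
    · rintro ⟨u, v⟩ hp
      simp only [P, Finset.mem_filter, Finset.mem_univ, true_and] at hp
      simp only [Finset.mem_filter, Finset.mem_univ, true_and, Prod.fst_swap,
        Prod.snd_swap, not_lt]
      exact ⟨hp.le, hp⟩
    · intros p _; simp
    · intros p _; simp
    · rintro ⟨u, v⟩ hp
      simp only [Prod.fst_swap, Prod.snd_swap]
      rw [adjMat_symm]
  rw [hswap, show (univ.filter fun p : Fin k × Fin k => p.1 < p.2) = P k from rfl,
    ← Finset.sum_add_distrib]
  apply Finset.sum_congr rfl
  intro p _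
  ring

lemma char_sum (c : Fin k → ZMod 2) :
    ∑ f : Fin k → ZMod 2, eps (∑ i, c i * f i)
      = if c = 0 then (2 : ℝ) ^ k else 0 := by
  have h1 : ∀ f : Fin k → ZMod 2, eps (∑ i, c i * f i) = ∏ i, eps (c i * f i) :=
    fun f => eps_sum _ _
  simp_rw [h1]
  have h2 : ∑ f ∈ Fintype.piFinset (fun _ : Fin k => (univ : Finset (ZMod 2))),
        ∏ i, eps (c i * f i)
      = ∏ i, ∑ a : ZMod 2, eps (c i * a) := (Finset.prod_univ_sum (fun _ : Fin k => (univ : Finset (ZMod 2))) (fun i a => eps (c i * a))).symm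
  rw [Fintype.piFinset_univ] at h2
  rw [h2]
  have h3 : ∀ i, ∑ a : ZMod 2, eps (c i * a) = if c i = 0 then 2 else 0 := by
    intro i
    have huniv : (univ : Finset (ZMod 2)) = {0, 1} := by decide
    rw [huniv, Finset.sum_insert (by decide), Finset.sum_singleton]
    rcases zmod2_cases (c i) with h | h <;>
      norm_num [h, eps, show (1 : ZMod 2) ≠ 0 by decide]
  simp_rw [h3]
  by_cases hc : c = 0
  · simp [hc]
  · obtain ⟨i, hi⟩ := Function.ne_iff.1 hc
    rw [if_neg hc]
    exact Finset.prod_eq_zero (Finset.mem_univ i) (by simpa using hi)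

lemma rank_add_ker :
    (adjMat k G).rank
      + Module.finrank (ZMod 2) (LinearMap.ker (adjMat k G).mulVecLin) = k := by
  have h := LinearMap.finrank_range_add_finrank_ker (adjMat k G).mulVecLin
  rw [Module.finrank_pi, Fintype.card_fin] at h
  exact h

lemma card_ker :
    (univ.filter fun x : Fin k → ZMod 2 => (adjMat k G).mulVec x = 0).card
      = 2 ^ (k - (adjMat k G).rank) := by
  rw [← Fintype.card_subtype]
  classical
  have e : {x : Fin k → ZMod 2 // (adjMat k G).mulVec x = 0}
      ≃ LinearMap.ker (adjMat k G).mulVecLin :=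
    Equiv.subtypeEquivRight fun x => by simp [LinearMap.mem_ker]
  rw [Fintype.card_congr e, Module.card_eq_pow_finrank (K := ZMod 2), ZMod.card]
  congr 1
  have h := rank_add_ker (k := k) G
  have h2 := Matrix.rank_le_card_width (adjMat k G)
  omega

def qform (x : Fin k → ZMod 2) : ZMod 2 :=
  ∑ p ∈ P k, adjMat k G p.1 p.2 * x p.1 * x p.2

lemma mulVec_apply (x : Fin k → ZMod 2) (v : Fin k) :
    (adjMat k G).mulVec x v = ∑ u : Fin k, adjMat k G v u * x u := rfl

lemma piv_parity (S T : Finset (Fin k)) :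
    (-1 : ℝ) ^ (Nat.card (G ⊓ triOn S T).edgeSet)
      = eps (∑ u : Fin k, ∑ v : Fin k, adjMat k G u v * ofS S u * ofS T v) := by
  classical
  rw [edge_parity]
  congr 1
  rw [← sum_P_pairing]
  exact Finset.sum_congr rfl fun p _ => tri_term G S T p.1 p.2

lemma com_parity (S : Finset (Fin k)) :
    (-1 : ℝ) ^ (Nat.card (G ⊓ cliqueOn S).edgeSet) = eps (qform G (ofS S)) := by
  classical
  rw [edge_parity]
  congr 1
  exact Finset.sum_congr rfl fun p _ => clique_term G S p.1 p.2

lemma lamPiv_eq :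
    lamPiv k G = ((2 : ℝ) ^ (2 * k))⁻¹ *
      ∑ x : Fin k → ZMod 2, (if (adjMat k G).mulVec x = 0 then (2 : ℝ) ^ k else 0) := by
  unfold lamPiv
  congr 1
  calc ∑ S : Finset (Fin k), ∑ T : Finset (Fin k),
        (-1 : ℝ) ^ (Nat.card (G ⊓ triOn S T).edgeSet)
      = ∑ S : Finset (Fin k), ∑ T : Finset (Fin k),
          eps (∑ u : Fin k, ∑ v : Fin k, adjMat k G u v * ofS S u * ofS T v) :=
        Finset.sum_congr rfl fun S _ => Finset.sum_congr rfl fun T _ => piv_parity G S T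
    _ = ∑ x : Fin k → ZMod 2, ∑ y : Fin k → ZMod 2,
          eps (∑ u : Fin k, ∑ v : Fin k, adjMat k G u v * x u * y v) := by
        refine Fintype.sum_equiv (fEquiv k) _ _ fun S => ?_
        exact Fintype.sum_equiv (fEquiv k) _ _ fun T => rfl
    _ = ∑ x : Fin k → ZMod 2, (if (adjMat k G).mulVec x = 0 then (2 : ℝ) ^ k else 0) := by
        refine Finset.sum_congr rfl fun x _ => ?_
        have hre : ∀ y : Fin k → ZMod 2,
            (∑ u : Fin k, ∑ v : Fin k, adjMat k G u v * x u * y v)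
              = ∑ v : Fin k, (adjMat k G).mulVec x v * y v := by
          intro y
          rw [Finset.sum_comm]
          refine Finset.sum_congr rfl fun v _ => ?_
          rw [mulVec_apply, Finset.sum_mul]
          refine Finset.sum_congr rfl fun u _ => ?_
          rw [adjMat_symm]
        simp_rw [hre]
        exact char_sum ((adjMat k G).mulVec x)

lemma part1 : lamPiv k G = ((2 : ℝ) ^ (adjMat k G).rank)⁻¹ := by
  have hr : (adjMat k G).rank ≤ k :=
    le_trans (Matrix.rank_le_card_width _) (by simp)
  rw [lamPiv_eq, ← Finset.sum_filter, Finset.sum_const, card_ker, nsmul_eq_mul]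
  push_cast
  rw [← pow_add,
    show 2 * k = (adjMat k G).rank + (k - (adjMat k G).rank + k) from by omega,
    pow_add, mul_inv]
  rw [mul_assoc, inv_mul_cancel₀ (by positivity), mul_one]

lemma lamCom_eq :
    lamCom k G = ((2 : ℝ) ^ k)⁻¹ * ∑ x : Fin k → ZMod 2, eps (qform G x) := by
  unfold lamCom
  congr 1
  calc ∑ S : Finset (Fin k), (-1 : ℝ) ^ (Nat.card (G ⊓ cliqueOn S).edgeSet)
      = ∑ S : Finset (Fin k), eps (qform G (ofS S)) :=
        Finset.sum_congr rfl fun S _ => com_parity G S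
    _ = ∑ x : Fin k → ZMod 2, eps (qform G x) :=
        Fintype.sum_equiv (fEquiv k) _ _ fun S => rfl

lemma zmod2_add_self (a : ZMod 2) : a + a = 0 := by
  rcases zmod2_cases a with rfl | rfl <;> decide

lemma qform_add (x z : Fin k → ZMod 2) :
    qform G (x + z) = qform G x + qform G z
      + ∑ p ∈ P k, adjMat k G p.1 p.2 * (x p.1 * z p.2 + x p.2 * z p.1) := by
  unfold qform
  rw [← Finset.sum_add_distrib, ← Finset.sum_add_distrib]
  refine Finset.sum_congr rfl fun p _ => ?_
  simp only [Pi.add_apply]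
  ring

lemma part2_eq : (lamCom k G) ^ 2 = ((2 : ℝ) ^ (2 * k))⁻¹ *
    ∑ z : Fin k → ZMod 2,
      eps (qform G z) * (if (adjMat k G).mulVec z = 0 then (2 : ℝ) ^ k else 0) := by
  rw [lamCom_eq, mul_pow, inv_pow, ← pow_mul, mul_comm k 2]
  congr 1
  rw [sq, Finset.sum_mul_sum]
  calc ∑ x : Fin k → ZMod 2, ∑ y : Fin k → ZMod 2, eps (qform G x) * eps (qform G y)
      = ∑ x : Fin k → ZMod 2, ∑ z : Fin k → ZMod 2,
          eps (qform G z) * eps (∑ u : Fin k, ∑ v : Fin k, adjMat k G u v * x u * z v) := by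
        refine Finset.sum_congr rfl fun x _ => ?_
        refine (Fintype.sum_equiv (Equiv.addLeft x)
          (fun z => eps (qform G x) * eps (qform G (x + z))) _ fun z => rfl).symm.trans ?_
        refine Finset.sum_congr rfl fun z _ => ?_
        rw [← eps_add, qform_add, ← add_assoc, ← add_assoc, zmod2_add_self, zero_add,
          sum_P_pairing, eps_add]
    _ = ∑ z : Fin k → ZMod 2,
          eps (qform G z) * (if (adjMat k G).mulVec z = 0 then (2 : ℝ) ^ k else 0) := by
        rw [Finset.sum_comm]
        refine Finset.sum_congr rfl fun z _ => ?_
        rw [← Finset.mul_sum]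
        congr 1
        have hre : ∀ x : Fin k → ZMod 2,
            (∑ u : Fin k, ∑ v : Fin k, adjMat k G u v * x u * z v)
              = ∑ u : Fin k, (adjMat k G).mulVec z u * x u := by
          intro x
          refine Finset.sum_congr rfl fun u _ => ?_
          rw [mulVec_apply, Finset.sum_mul]
          refine Finset.sum_congr rfl fun v _ => ?_
          ring
        simp_rw [hre]
        exact char_sum ((adjMat k G).mulVec z)

lemma part2 : (lamCom k G) ^ 2 ≤ lamPiv k G := by
  rw [part2_eq, lamPiv_eq]
  refine mul_le_mul_of_nonneg_left (Finset.sum_le_sum fun z _ => ?_) (by positivity)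
  exact mul_le_of_le_one_left (by positivity) (eps_le_one _)

end
end ER


/-- `λ^Piv_G = 2^{−rank_{F₂}(A)}` and `(λ^Com_G)² ≤ λ^Piv_G`, where `A` is the
adjacency matrix of `G` over `F₂`. -/
theorem eigenvalue_rank (k : ℕ) (G : SimpleGraph (Fin k)) :
    lamPiv k G = ((2 : ℝ) ^ (adjMat k G).rank)⁻¹ ∧
    (lamCom k G) ^ 2 ≤ lamPiv k G :=
  ⟨ER.part1 G, ER.part2 G⟩
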